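/- Suppose the trace function β satisfies Condition 1 and γ ∈ [0,1). Then for every Q ∈ ℝ^n and every (s,a), the operator M admits the refactored form (MQ)(s,a) = Σ_{t=0}^∞ γ^t Σ_{F_t} Pr_μ(F_t) β(F_t) R(S_t, A_t) + Σ_{t=1}^∞ γ^t Σ_{F_t} Pr_μ(F_t) (β(F_{t−1}) ρ_t − β(F_t)) Q(S_t, A_t), where the inner sums range over all length-t trajectories F_t from (s,a), F_{t−1} is the length-(t−1) prefix of F_t, and both outer series converge absolutely. In particular, under Condition 1 all the bootstrap weights β(F_{t−1}) ρ_t − β(F_t) are nonnegative. -/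

import Mathlib

open scoped BigOperators

/-- `P` is a transition function: `P s a` is a probability distribution on next states. -/
def IsTransition {S A : Type} [Fintype S] (P : S → A → S → ℝ) : Prop :=
  (∀ s a s', 0 ≤ P s a s') ∧ ∀ s a, ∑ s', P s a s' = 1

/-- `π` is a policy: `π s` is a probability distribution on actions. -/
def IsPolicy {S A : Type} [Fintype A] (π : S → A → ℝ) : Prop :=
  (∀ s a, 0 ≤ π s a) ∧ ∀ s, ∑ a, π s a = 1

/-- A behavior policy assigns positive probability to every action in every state. -/
def IsBehavior {S A : Type} [Fintype A] (μ : S → A → ℝ) : Prop :=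
  IsPolicy μ ∧ ∀ s a, 0 < μ s a

/-- The policy matrix `P_π((s,a),(s',a')) = P(s'|s,a)·π(a'|s')`. -/
def polMat {S A : Type} (P : S → A → S → ℝ) (π : S → A → ℝ) :
    Matrix (S × A) (S × A) ℝ :=
  fun x y => P x.1 x.2 y.1 * π y.1 y.2

/-- The importance-sampling ratio `ρ(s,a) = π(a|s) / μ(a|s)`. -/
noncomputable def isRatio {S A : Type} (π μ : S → A → ℝ) (x : S × A) : ℝ :=
  π x.1 x.2 / μ x.1 x.2

/-- Probability under behavior policy `μ` of a length-`t` trajectory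
`F = ((S_0,A_0),…,(S_t,A_t))`:  `∏_{k=1}^t P(S_k|S_{k-1},A_{k-1})·μ(A_k|S_k)`. -/
def prMu {S A : Type} (P : S → A → S → ℝ) (μ : S → A → ℝ) {t : ℕ}
    (F : Fin (t + 1) → S × A) : ℝ :=
  ∏ k : Fin t,
    (P (F k.castSucc).1 (F k.castSucc).2 (F k.succ).1 * μ (F k.succ).1 (F k.succ).2)

/-- A trace function: a nonnegative weight for every finite trajectory,
equal to `1` on length-0 trajectories. -/
def IsTrace {S A : Type} (β : (t : ℕ) → (Fin (t + 1) → S × A) → ℝ) : Prop :=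
  (∀ t F, 0 ≤ β t F) ∧ ∀ F : Fin 1 → S × A, β 0 F = 1

/-- Condition 1: `β(F_t) ≤ β(F_{t-1})·ρ_t` for every `t ≥ 1` and every trajectory `F_t`,
where `F_{t-1}` is the length-`(t-1)` prefix. -/
def Cond1 {S A : Type} (π μ : S → A → ℝ)
    (β : (t : ℕ) → (Fin (t + 1) → S × A) → ℝ) : Prop :=
  ∀ (t : ℕ) (F : Fin (t + 2) → S × A),
    β (t + 1) F ≤ β t (fun k => F k.castSucc) * isRatio π μ (F (Fin.last (t + 1)))

/-- The matrix `B_t((s,a),(s',a')) = Σ_{F_t from (s,a) ending at (s',a')} Pr_μ(F_t)·β(F_t)`. -/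
noncomputable def Bmat {S A : Type} [Fintype S] [Fintype A] [DecidableEq S] [DecidableEq A]
    (P : S → A → S → ℝ) (μ : S → A → ℝ)
    (β : (t : ℕ) → (Fin (t + 1) → S × A) → ℝ) (t : ℕ) :
    Matrix (S × A) (S × A) ℝ :=
  fun x y => ∑ F : Fin (t + 1) → S × A,
    if F 0 = x ∧ F (Fin.last t) = y then prMu P μ F * β t F else 0

/-- The Bellman operator `T_π Q = R + γ P_π Q`. -/
noncomputable def Tpi {S A : Type} [Fintype S] [Fintype A]
    (P : S → A → S → ℝ) (R : S × A → ℝ) (π : S → A → ℝ) (γ : ℝ)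
    (Q : S × A → ℝ) : S × A → ℝ :=
  fun x => R x + γ * (polMat P π).mulVec Q x

/-- The Bellman optimality operator
`(T Q)(s,a) = R(s,a) + γ Σ_{s'} P(s'|s,a) max_{a'} Q(s',a')`. -/
noncomputable def Topt {S A : Type} [Fintype S] [Fintype A] [Nonempty A]
    (P : S → A → S → ℝ) (R : S × A → ℝ) (γ : ℝ) (Q : S × A → ℝ) : S × A → ℝ :=
  fun x => R x + γ * ∑ s', P x.1 x.2 s' * ⨆ a', Q (s', a')

/-- The operator `M Q = Q + Σ_{t=0}^∞ γ^t B_t (T_π Q − Q)`. -/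
noncomputable def Mop {S A : Type} [Fintype S] [Fintype A] [DecidableEq S] [DecidableEq A]
    (P : S → A → S → ℝ) (R : S × A → ℝ) (π μ : S → A → ℝ)
    (β : (t : ℕ) → (Fin (t + 1) → S × A) → ℝ) (γ : ℝ)
    (Q : S × A → ℝ) : S × A → ℝ :=
  fun x => Q x + ∑' t : ℕ,
    γ ^ t * (Bmat P μ β t).mulVec (fun y => Tpi P R π γ Q y - Q y) x

/-- The matrix `Z = Σ_{t=1}^∞ γ^t (B_{t−1} P_π − B_t)`. -/
noncomputable def Zmat {S A : Type} [Fintype S] [Fintype A] [DecidableEq S] [DecidableEq A]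
    (P : S → A → S → ℝ) (π μ : S → A → ℝ)
    (β : (t : ℕ) → (Fin (t + 1) → S × A) → ℝ) (γ : ℝ) :
    Matrix (S × A) (S × A) ℝ :=
  fun x y => ∑' t : ℕ,
    γ ^ (t + 1) * ((Bmat P μ β t * polMat P π - Bmat P μ β (t + 1)) x y)

/-- The matrix `C = Σ_{t=0}^∞ γ^t B_t`. -/
noncomputable def Cmat {S A : Type} [Fintype S] [Fintype A] [DecidableEq S] [DecidableEq A]
    (P : S → A → S → ℝ) (μ : S → A → ℝ)
    (β : (t : ℕ) → (Fin (t + 1) → S × A) → ℝ) (γ : ℝ) :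
    Matrix (S × A) (S × A) ℝ :=
  fun x y => ∑' t : ℕ, γ ^ t * Bmat P μ β t x y

/-- The operator `M Q = Q + C (T_π Q − Q)` with `C = Σ_t γ^t B_t`. -/
noncomputable def MopC {S A : Type} [Fintype S] [Fintype A] [DecidableEq S] [DecidableEq A]
    (P : S → A → S → ℝ) (R : S × A → ℝ) (π μ : S → A → ℝ)
    (β : (t : ℕ) → (Fin (t + 1) → S × A) → ℝ) (γ : ℝ)
    (Q : S × A → ℝ) : S × A → ℝ :=
  fun x => Q x + (Cmat P μ β γ).mulVec (fun y => Tpi P R π γ Q y - Q y) x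

namespace Stmt17Aux

open Finset

variable {S A : Type} [Fintype S] [Fintype A] [DecidableEq S] [DecidableEq A]

/-- Splitting off the last element of a tuple. -/
def snocEquiv (X : Type) (t : ℕ) : ((Fin (t + 1) → X) × X) ≃ (Fin (t + 2) → X) where
  toFun p := Fin.snoc p.1 p.2
  invFun F := (fun k => F k.castSucc, F (Fin.last (t + 1)))
  left_inv p := by
    refine Prod.ext ?_ ?_
    · funext k; simp
    · simp
  right_inv F := Fin.snoc_init_self F

lemma sum_snoc {X : Type} [Fintype X] [DecidableEq X] (t : ℕ) (f : (Fin (t + 2) → X) → ℝ) :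
    ∑ F : Fin (t + 2) → X, f F = ∑ G : Fin (t + 1) → X, ∑ y : X, f (Fin.snoc G y) := by
  rw [← Equiv.sum_comp (snocEquiv X t) f, Fintype.sum_prod_type]
  rfl

lemma prMu_snoc (P : S → A → S → ℝ) (μ : S → A → ℝ) (t : ℕ)
    (G : Fin (t + 1) → S × A) (y : S × A) :
    prMu P μ (Fin.snoc G y : Fin (t + 2) → S × A) =
      prMu P μ G * (P (G (Fin.last t)).1 (G (Fin.last t)).2 y.1 * μ y.1 y.2) := by
  unfold prMu
  rw [Fin.prod_univ_castSucc]
  congr 1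
  · refine Finset.prod_congr rfl fun k _ => ?_
    rw [Fin.succ_castSucc]
    simp only [Fin.snoc_castSucc]
  · rw [Fin.succ_last]
    simp

lemma snoc_zero' {X : Type} (t : ℕ) (G : Fin (t + 1) → X) (y : X) :
    (Fin.snoc G y : Fin (t + 2) → X) 0 = G 0 := by
  have h : ((0 : Fin (t + 1)).castSucc) = (0 : Fin (t + 2)) := rfl
  rw [← h, Fin.snoc_castSucc]

lemma snoc_pre {X : Type} (t : ℕ) (G : Fin (t + 1) → X) (y : X) :
    (fun k : Fin (t + 1) => (Fin.snoc G y : Fin (t + 2) → X) k.castSucc) = G := by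
  funext k; rw [Fin.snoc_castSucc]

lemma prMu_nonneg {P : S → A → S → ℝ} {μ : S → A → ℝ}
    (hP : ∀ s a s', 0 ≤ P s a s') (hμ : ∀ s a, 0 ≤ μ s a) {t : ℕ}
    (F : Fin (t + 1) → S × A) : 0 ≤ prMu P μ F :=
  Finset.prod_nonneg fun _ _ => mul_nonneg (hP _ _ _) (hμ _ _)

lemma polMat_rowsum {P : S → A → S → ℝ} {π : S → A → ℝ}
    (hP : IsTransition P) (hπ : IsPolicy π) (z : S × A) :
    ∑ y : S × A, polMat P π z y = 1 := by
  rw [Fintype.sum_prod_type]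
  simp only [polMat]
  calc ∑ s', ∑ a', P z.1 z.2 s' * π s' a'
      = ∑ s', P z.1 z.2 s' * ∑ a', π s' a' := by
        refine Finset.sum_congr rfl fun s' _ => ?_; rw [Finset.mul_sum]
    _ = 1 := by simp [hπ.2, hP.2]

lemma rho_expand (P : S → A → S → ℝ) (π μ : S → A → ℝ)
    (hμpos : ∀ s a, 0 < μ s a)
    (β : (t : ℕ) → (Fin (t + 1) → S × A) → ℝ) (t : ℕ) (x : S × A) (g : S × A → ℝ) :
    (∑ F : Fin (t + 2) → S × A,
      if F 0 = x then
        prMu P μ F * (β t (fun k => F k.castSucc) * isRatio π μ (F (Fin.last (t + 1)))) *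
          g (F (Fin.last (t + 1)))
      else 0) =
    ∑ G : Fin (t + 1) → S × A,
      if G 0 = x then prMu P μ G * β t G * ∑ y : S × A, polMat P π (G (Fin.last t)) y * g y
      else 0 := by
  rw [sum_snoc]
  refine Finset.sum_congr rfl fun G _ => ?_
  by_cases hG : G 0 = x
  · simp only [snoc_zero', snoc_pre, Fin.snoc_last, hG, if_true, prMu_snoc]
    rw [Finset.mul_sum]
    refine Finset.sum_congr rfl fun y _ => ?_
    have hμy : μ y.1 y.2 ≠ 0 := (hμpos y.1 y.2).ne'
    simp only [isRatio, polMat]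
    field_simp
  · simp [snoc_zero', hG]

lemma B_mulVec (P : S → A → S → ℝ) (μ : S → A → ℝ)
    (β : (t : ℕ) → (Fin (t + 1) → S × A) → ℝ) (t : ℕ) (x : S × A) (g : S × A → ℝ) :
    (Bmat P μ β t).mulVec g x =
      ∑ F : Fin (t + 1) → S × A,
        if F 0 = x then prMu P μ F * β t F * g (F (Fin.last t)) else 0 := by
  simp only [Matrix.mulVec, dotProduct, Bmat, Finset.sum_mul]
  rw [Finset.sum_comm]
  refine Finset.sum_congr rfl fun F _ => ?_
  by_cases h : F 0 = x
  · simp [h, ite_mul, mul_assoc]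
  · simp [h]

lemma BP_mulVec (P : S → A → S → ℝ) (π μ : S → A → ℝ)
    (β : (t : ℕ) → (Fin (t + 1) → S × A) → ℝ) (t : ℕ) (x : S × A) (g : S × A → ℝ) :
    (Bmat P μ β t * polMat P π).mulVec g x =
      ∑ G : Fin (t + 1) → S × A,
        if G 0 = x then
          prMu P μ G * β t G * ∑ y : S × A, polMat P π (G (Fin.last t)) y * g y
        else 0 := by
  rw [← Matrix.mulVec_mulVec, B_mulVec]
  simp only [Matrix.mulVec, dotProduct]

lemma B0_mulVec (P : S → A → S → ℝ) (μ : S → A → ℝ)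
    (β : (t : ℕ) → (Fin (t + 1) → S × A) → ℝ)
    (hβ0 : ∀ F : Fin 1 → S × A, β 0 F = 1) (g : S × A → ℝ) (x : S × A) :
    (Bmat P μ β 0).mulVec g x = g x := by
  rw [B_mulVec]
  rw [← Equiv.sum_comp (Equiv.funUnique (Fin 1) (S × A)).symm]
  simp [prMu, hβ0, Equiv.funUnique]

/-- Total weighted mass of trajectories of length `t` from `x`. -/
noncomputable def rowW (P : S → A → S → ℝ) (μ : S → A → ℝ)
    (β : (t : ℕ) → (Fin (t + 1) → S × A) → ℝ) (t : ℕ) (x : S × A) : ℝ :=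
  ∑ F : Fin (t + 1) → S × A, if F 0 = x then prMu P μ F * β t F else 0

lemma rowW_nonneg {P : S → A → S → ℝ} {μ : S → A → ℝ}
    {β : (t : ℕ) → (Fin (t + 1) → S × A) → ℝ}
    (hP : ∀ s a s', 0 ≤ P s a s') (hμ : ∀ s a, 0 ≤ μ s a)
    (hβ : ∀ t F, 0 ≤ β t F) (t : ℕ) (x : S × A) : 0 ≤ rowW P μ β t x :=
  Finset.sum_nonneg fun F _ => by
    by_cases h : F 0 = x
    · simp only [h, if_true]
      exact mul_nonneg (prMu_nonneg hP hμ F) (hβ t F)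
    · simp [h]

lemma rowW_zero (P : S → A → S → ℝ) (μ : S → A → ℝ)
    (β : (t : ℕ) → (Fin (t + 1) → S × A) → ℝ)
    (hβ0 : ∀ F : Fin 1 → S × A, β 0 F = 1) (x : S × A) :
    rowW P μ β 0 x = 1 := by
  unfold rowW
  rw [← Equiv.sum_comp (Equiv.funUnique (Fin 1) (S × A)).symm]
  simp [prMu, hβ0, Equiv.funUnique]

lemma rho_sum_eq_rowW {P : S → A → S → ℝ} {π μ : S → A → ℝ}
    {β : (t : ℕ) → (Fin (t + 1) → S × A) → ℝ}
    (hP : IsTransition P) (hπ : IsPolicy π) (hμpos : ∀ s a, 0 < μ s a)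
    (t : ℕ) (x : S × A) :
    (∑ F : Fin (t + 2) → S × A,
      if F 0 = x then
        prMu P μ F * (β t (fun k => F k.castSucc) * isRatio π μ (F (Fin.last (t + 1))))
      else 0) = rowW P μ β t x := by
  have h := rho_expand P π μ hμpos β t x (fun _ => 1)
  simp only [mul_one] at h
  rw [h]
  refine Finset.sum_congr rfl fun G _ => ?_
  by_cases hG : G 0 = x
  · simp [hG, polMat_rowsum hP hπ]
  · simp [hG]

lemma rowW_succ_le {P : S → A → S → ℝ} {π μ : S → A → ℝ}
    {β : (t : ℕ) → (Fin (t + 1) → S × A) → ℝ}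
    (hP : IsTransition P) (hπ : IsPolicy π) (hμ : IsBehavior μ)
    (hc : Cond1 π μ β) (t : ℕ) (x : S × A) :
    rowW P μ β (t + 1) x ≤ rowW P μ β t x := by
  rw [← rho_sum_eq_rowW hP hπ hμ.2 t x]
  refine Finset.sum_le_sum fun F _ => ?_
  by_cases h : F 0 = x
  · simp only [h, if_true]
    exact mul_le_mul_of_nonneg_left (hc t F) (prMu_nonneg hP.1 (fun s a => (hμ.2 s a).le) F)
  · simp [h]

lemma rowW_le_one {P : S → A → S → ℝ} {π μ : S → A → ℝ}
    {β : (t : ℕ) → (Fin (t + 1) → S × A) → ℝ}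
    (hP : IsTransition P) (hπ : IsPolicy π) (hμ : IsBehavior μ) (hβ : IsTrace β)
    (hc : Cond1 π μ β) (t : ℕ) (x : S × A) :
    rowW P μ β t x ≤ 1 := by
  induction t with
  | zero => exact le_of_eq (rowW_zero P μ β hβ.2 x)
  | succ t ih => exact (rowW_succ_le hP hπ hμ hc t x).trans ih

lemma split_b {P : S → A → S → ℝ} {π μ : S → A → ℝ}
    {β : (t : ℕ) → (Fin (t + 1) → S × A) → ℝ} (t : ℕ) (x : S × A) (g : S × A → ℝ) :
    (∑ F : Fin (t + 2) → S × A,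
      if F 0 = x then
        prMu P μ F *
          (β t (fun k => F k.castSucc) * isRatio π μ (F (Fin.last (t + 1))) - β (t + 1) F) *
          g (F (Fin.last (t + 1)))
      else 0) =
    (∑ F : Fin (t + 2) → S × A,
      if F 0 = x then
        prMu P μ F * (β t (fun k => F k.castSucc) * isRatio π μ (F (Fin.last (t + 1)))) *
          g (F (Fin.last (t + 1)))
      else 0) -
    (∑ F : Fin (t + 2) → S × A,
      if F 0 = x then prMu P μ F * β (t + 1) F * g (F (Fin.last (t + 1))) else 0) := by
  rw [← Finset.sum_sub_distrib]
  refine Finset.sum_congr rfl fun F _ => ?_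
  by_cases h : F 0 = x
  · simp only [h, if_true]; ring
  · simp [h]

lemma abs_weighted_le [Nonempty S] [Nonempty A] {n : ℕ}
    (w : (Fin (n + 1) → S × A) → ℝ) (hw : ∀ F, 0 ≤ w F)
    (h : S × A → ℝ) (c : ℝ) (hch : ∀ z, |h z| ≤ c) (x : S × A) :
    |∑ F : Fin (n + 1) → S × A, if F 0 = x then w F * h (F (Fin.last n)) else 0| ≤
      (∑ F : Fin (n + 1) → S × A, if F 0 = x then w F else 0) * c := by
  have hc : 0 ≤ c := (abs_nonneg _).trans (hch (Classical.arbitrary _))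
  calc |∑ F : Fin (n + 1) → S × A, if F 0 = x then w F * h (F (Fin.last n)) else 0|
      ≤ ∑ F : Fin (n + 1) → S × A,
          |if F 0 = x then w F * h (F (Fin.last n)) else 0| :=
        Finset.abs_sum_le_sum_abs _ _
    _ ≤ ∑ F : Fin (n + 1) → S × A, (if F 0 = x then w F else 0) * c := by
        refine Finset.sum_le_sum fun F _ => ?_
        by_cases hF : F 0 = x
        · simp only [hF, if_true, abs_mul, abs_of_nonneg (hw F)]
          exact mul_le_mul_of_nonneg_left (hch _) (hw F)
        · simp [hF]
    _ = _ := (Finset.sum_mul _ _ _).symm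

end Stmt17Aux


namespace Stmt17Aux

variable {S A : Type} [Fintype S] [Fintype A] [DecidableEq S] [DecidableEq A]

/-- The reward term at time `t`. -/
noncomputable def aT (P : S → A → S → ℝ) (R : S × A → ℝ) (μ : S → A → ℝ)
    (β : (t : ℕ) → (Fin (t + 1) → S × A) → ℝ) (x : S × A) (t : ℕ) : ℝ :=
  ∑ F : Fin (t + 1) → S × A,
    if F 0 = x then prMu P μ F * β t F * R (F (Fin.last t)) else 0

/-- The bootstrap term at time `t`. -/
noncomputable def bT (P : S → A → S → ℝ) (π μ : S → A → ℝ)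
    (β : (t : ℕ) → (Fin (t + 1) → S × A) → ℝ) (Q : S × A → ℝ) (x : S × A) (t : ℕ) : ℝ :=
  ∑ F : Fin (t + 2) → S × A,
    if F 0 = x then
      prMu P μ F *
        (β t (fun k => F k.castSucc) * isRatio π μ (F (Fin.last (t + 1)))
          - β (t + 1) F) * Q (F (Fin.last (t + 1)))
    else 0

end Stmt17Aux

set_option maxHeartbeats 2000000
open Stmt17Aux

/-- under Condition 1 and `γ ∈ [0,1)`, the operator `M` refactors as a
trajectory-weighted discounted-reward series plus a series of weighted value-function
bootstraps with nonnegative weights `β(F_{t−1})ρ_t − β(F_t)`, both converging absolutely. -/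
theorem stmt17 {S A : Type} [Fintype S] [Fintype A] [DecidableEq S] [DecidableEq A]
    [Nonempty S] [Nonempty A]
    (P : S → A → S → ℝ) (R : S × A → ℝ) (π μ : S → A → ℝ) (γ : ℝ)
    (β : (t : ℕ) → (Fin (t + 1) → S × A) → ℝ)
    (hP : IsTransition P) (hπ : IsPolicy π) (hμ : IsBehavior μ) (hβ : IsTrace β)
    (hγ0 : 0 ≤ γ) (hγ1 : γ < 1)
    (hc : Cond1 π μ β) :
    ∀ (Q : S × A → ℝ) (x : S × A),
      (Summable fun t : ℕ =>
        |γ ^ t * ∑ F : Fin (t + 1) → S × A,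
          if F 0 = x then prMu P μ F * β t F * R (F (Fin.last t)) else 0|) ∧
      (Summable fun t : ℕ =>
        |γ ^ (t + 1) * ∑ F : Fin (t + 2) → S × A,
          if F 0 = x then
            prMu P μ F *
              (β t (fun k => F k.castSucc) * isRatio π μ (F (Fin.last (t + 1)))
                - β (t + 1) F) * Q (F (Fin.last (t + 1)))
          else 0|) ∧
      Mop P R π μ β γ Q x =
        (∑' t : ℕ, γ ^ t * ∑ F : Fin (t + 1) → S × A,
          if F 0 = x then prMu P μ F * β t F * R (F (Fin.last t)) else 0) +
        (∑' t : ℕ, γ ^ (t + 1) * ∑ F : Fin (t + 2) → S × A,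
          if F 0 = x then
            prMu P μ F *
              (β t (fun k => F k.castSucc) * isRatio π μ (F (Fin.last (t + 1)))
                - β (t + 1) F) * Q (F (Fin.last (t + 1)))
          else 0) ∧
      ∀ (t : ℕ) (F : Fin (t + 2) → S × A),
        0 ≤ β t (fun k => F k.castSucc) * isRatio π μ (F (Fin.last (t + 1)))
            - β (t + 1) F := by
  intro Q x
  have hμ0 : ∀ s a, 0 ≤ μ s a := fun s a => (hμ.2 s a).le
  have hprn : ∀ {t : ℕ} (F : Fin (t + 1) → S × A), 0 ≤ prMu P μ F :=
    fun F => prMu_nonneg hP.1 hμ0 F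
  have hwnn : ∀ (t : ℕ) (F : Fin (t + 2) → S × A),
      0 ≤ β t (fun k => F k.castSucc) * isRatio π μ (F (Fin.last (t + 1))) - β (t + 1) F :=
    fun t F => sub_nonneg.2 (hc t F)
  set Rb := ∑ y : S × A, |R y| with hRbdef
  set Qb := ∑ y : S × A, |Q y| with hQbdef
  have hRb : ∀ z : S × A, |R z| ≤ Rb := fun z =>
    Finset.single_le_sum (fun y _ => abs_nonneg (R y)) (Finset.mem_univ z)
  have hQb : ∀ z : S × A, |Q z| ≤ Qb := fun z =>
    Finset.single_le_sum (fun y _ => abs_nonneg (Q y)) (Finset.mem_univ z)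
  have hRb0 : 0 ≤ Rb := Finset.sum_nonneg fun _ _ => abs_nonneg _
  have hQb0 : 0 ≤ Qb := Finset.sum_nonneg fun _ _ => abs_nonneg _
  have hW1 : ∀ t, rowW P μ β t x ≤ 1 := fun t => rowW_le_one hP hπ hμ hβ hc t x
  have hW0 : ∀ t, 0 ≤ rowW P μ β t x := fun t => rowW_nonneg hP.1 hμ0 hβ.1 t x
  have Sgeo : Summable (fun t : ℕ => γ ^ t) := summable_geometric_of_lt_one hγ0 hγ1
  have ha_abs : ∀ t, |aT P R μ β x t| ≤ Rb := by
    intro t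
    have h2 := abs_weighted_le (fun F : Fin (t + 1) → S × A => prMu P μ F * β t F)
      (fun F => mul_nonneg (hprn F) (hβ.1 t F)) R Rb hRb x
    exact h2.trans (mul_le_of_le_one_left hRb0 (hW1 t))
  have hbw : ∀ t, (∑ F : Fin (t + 2) → S × A,
      if F 0 = x then
        prMu P μ F *
          (β t (fun k => F k.castSucc) * isRatio π μ (F (Fin.last (t + 1)))
            - β (t + 1) F)
      else 0) = rowW P μ β t x - rowW P μ β (t + 1) x := by
    intro t
    have h1 := split_b (P := P) (π := π) (μ := μ) (β := β) t x (fun _ => (1 : ℝ))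
    simp only [mul_one] at h1
    rw [h1, rho_sum_eq_rowW hP hπ hμ.2 t x]
    rfl
  have hb_abs : ∀ t, |bT P π μ β Q x t| ≤ Qb := by
    intro t
    have h2 := abs_weighted_le (n := t + 1)
      (fun F : Fin (t + 2) → S × A =>
        prMu P μ F *
          (β t (fun k => F k.castSucc) * isRatio π μ (F (Fin.last (t + 1)))
            - β (t + 1) F))
      (fun F => mul_nonneg (hprn F) (hwnn t F)) Q Qb hQb x
    refine h2.trans ?_
    have h3 : (∑ F : Fin (t + 2) → S × A,
        if F 0 = x then
          prMu P μ F *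
            (β t (fun k => F k.castSucc) * isRatio π μ (F (Fin.last (t + 1)))
              - β (t + 1) F)
        else 0) ≤ 1 := by
      rw [hbw t]
      have h4 := hW0 (t + 1)
      have h5 := hW1 t
      linarith
    exact mul_le_of_le_one_left hQb0 h3
  set q : ℕ → ℝ := fun t => (Bmat P μ β t).mulVec Q x with hqdef
  have hq_abs : ∀ t, |q t| ≤ Qb := by
    intro t
    have h2 := abs_weighted_le (fun F : Fin (t + 1) → S × A => prMu P μ F * β t F)
      (fun F => mul_nonneg (hprn F) (hβ.1 t F)) Q Qb hQb x
    have h4 : q t = ∑ F : Fin (t + 1) → S × A,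
        if F 0 = x then prMu P μ F * β t F * Q (F (Fin.last t)) else 0 :=
      B_mulVec P μ β t x Q
    rw [h4]
    exact h2.trans (mul_le_of_le_one_left hQb0 (hW1 t))
  have SQ : Summable (fun t : ℕ => γ ^ t * q t) := by
    refine Summable.of_abs (Summable.of_nonneg_of_le (fun t => abs_nonneg _)
      (fun t => ?_) (Sgeo.mul_right Qb))
    rw [abs_mul, abs_pow, abs_of_nonneg hγ0]
    exact mul_le_mul_of_nonneg_left (hq_abs t) (pow_nonneg hγ0 t)
  have SQ' : Summable (fun t : ℕ => γ ^ (t + 1) * q (t + 1)) :=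
    (summable_nat_add_iff 1).2 SQ
  have SA : Summable (fun t : ℕ => |γ ^ t * aT P R μ β x t|) := by
    refine Summable.of_nonneg_of_le (fun t => abs_nonneg _) (fun t => ?_) (Sgeo.mul_right Rb)
    rw [abs_mul, abs_pow, abs_of_nonneg hγ0]
    exact mul_le_mul_of_nonneg_left (ha_abs t) (pow_nonneg hγ0 t)
  have SB : Summable (fun t : ℕ => |γ ^ (t + 1) * bT P π μ β Q x t|) := by
    refine Summable.of_nonneg_of_le (fun t => abs_nonneg _) (fun t => ?_)
      (Sgeo.mul_right (γ * Qb))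
    rw [abs_mul, abs_pow, abs_of_nonneg hγ0]
    calc γ ^ (t + 1) * |bT P π μ β Q x t| ≤ γ ^ (t + 1) * Qb :=
          mul_le_mul_of_nonneg_left (hb_abs t) (pow_nonneg hγ0 _)
      _ = γ ^ t * (γ * Qb) := by ring
  have hbq : ∀ t : ℕ, bT P π μ β Q x t
      = (Bmat P μ β t * polMat P π).mulVec Q x - (Bmat P μ β (t + 1)).mulVec Q x := by
    intro t
    unfold bT
    rw [split_b t x Q, rho_expand P π μ hμ.2 β t x Q, ← BP_mulVec P π μ β t x Q]
    congr 1
    exact (B_mulVec P μ β (t + 1) x Q).symm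
  have e1 : ∀ t, (Bmat P μ β t).mulVec R x = aT P R μ β x t := fun t => B_mulVec P μ β t x R
  have e2 : ∀ t, (Bmat P μ β t * polMat P π).mulVec Q x = bT P π μ β Q x t + q (t + 1) := by
    intro t
    have h := hbq t
    have h' : (Bmat P μ β (t + 1)).mulVec Q x = q (t + 1) := rfl
    rw [h'] at h
    linarith
  have e3 : ∀ t, (Bmat P μ β t).mulVec Q x = q t := fun t => rfl
  have hq0 : q 0 = Q x := B0_mulVec P μ β hβ.2 Q x
  have hD : ∀ t : ℕ, (Bmat P μ β t).mulVec (fun y => Tpi P R π γ Q y - Q y) x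
      = (Bmat P μ β t).mulVec R x + γ * ((Bmat P μ β t * polMat P π).mulVec Q x)
        - (Bmat P μ β t).mulVec Q x := by
    intro t
    rw [← Matrix.mulVec_mulVec]
    simp only [Matrix.mulVec, dotProduct, Tpi]
    rw [Finset.mul_sum, ← Finset.sum_add_distrib, ← Finset.sum_sub_distrib]
    exact Finset.sum_congr rfl fun y _ => by ring
  have hsplit : ∀ t : ℕ,
      γ ^ t * (Bmat P μ β t).mulVec (fun y => Tpi P R π γ Q y - Q y) x
        = γ ^ t * aT P R μ β x t +
          (γ ^ (t + 1) * bT P π μ β Q x t + (γ ^ (t + 1) * q (t + 1) - γ ^ t * q t)) := by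
    intro t
    rw [hD t, e1 t, e2 t, e3 t]
    ring
  have hlim : Filter.Tendsto (fun n : ℕ => γ ^ n * q n) Filter.atTop (nhds 0) := by
    have hg : Filter.Tendsto (fun n : ℕ => γ ^ n * Qb) Filter.atTop (nhds 0) := by
      have h := (tendsto_pow_atTop_nhds_zero_of_lt_one hγ0 hγ1).mul_const Qb
      rwa [zero_mul] at h
    refine squeeze_zero_norm (fun n => ?_) hg
    rw [Real.norm_eq_abs, abs_mul, abs_pow, abs_of_nonneg hγ0]
    exact mul_le_mul_of_nonneg_left (hq_abs n) (pow_nonneg hγ0 n)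
  have hd : Summable (fun t : ℕ => γ ^ (t + 1) * q (t + 1) - γ ^ t * q t) := SQ'.sub SQ
  have htel : (∑' t : ℕ, (γ ^ (t + 1) * q (t + 1) - γ ^ t * q t)) = -Q x := by
    have h1 := hd.hasSum.tendsto_sum_nat
    have hps : ∀ n : ℕ, (∑ i ∈ Finset.range n, (γ ^ (i + 1) * q (i + 1) - γ ^ i * q i))
        = γ ^ n * q n - γ ^ 0 * q 0 := fun n => Finset.sum_range_sub (fun i => γ ^ i * q i) n
    simp only [hps] at h1
    have h3 : Filter.Tendsto (fun n : ℕ => γ ^ n * q n - γ ^ 0 * q 0) Filter.atTop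
        (nhds (0 - γ ^ 0 * q 0)) := hlim.sub_const _
    have h4 := tendsto_nhds_unique h1 h3
    rw [h4, hq0]
    simp
  have SA' : Summable (fun t : ℕ => γ ^ t * aT P R μ β x t) := summable_abs_iff.mp SA
  have SB' : Summable (fun t : ℕ => γ ^ (t + 1) * bT P π μ β Q x t) := summable_abs_iff.mp SB
  refine ⟨SA, SB, ?_, hwnn⟩
  show Mop P R π μ β γ Q x
      = (∑' t : ℕ, γ ^ t * aT P R μ β x t) + ∑' t : ℕ, γ ^ (t + 1) * bT P π μ β Q x t
  have hM : Mop P R π μ β γ Q x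
      = Q x + ∑' t : ℕ, γ ^ t * (Bmat P μ β t).mulVec (fun y => Tpi P R π γ Q y - Q y) x := rfl
  rw [hM, tsum_congr hsplit, Summable.tsum_add SA' (SB'.add hd), Summable.tsum_add SB' hd, htel]
  ring
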